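/- Let k ≥ 1 and m = (m_1 ≥ ... ≥ m_k > 0) a partition. For any subset I = {i_1 < ... < i_ℓ} ⊆ {0,...,k-1}, the tuple φ_{i_1} ∘ ... ∘ φ_{i_ℓ}(m) (composition applied with φ_{i_1} last) has all entries ≥ 0 and entrywise ≤ m; moreover its total sum equals |m| - ℓ where |m| = m_1 + ... + m_k. -/

import Mathlib

/-- The operator `φ_ℓ` on a tuple `m : ℕ → ℕ` (with respect to length `k`):
subtract `1` at position `p = min{q : ℓ+1 ≤ q ∧ q ≤ k ∧ m q > m (q+1)}`. -/
noncomputable def phiOp (k ℓ : ℕ) (m : ℕ → ℕ) : ℕ → ℕ :=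
  fun j => if j = sInf {q | ℓ + 1 ≤ q ∧ q ≤ k ∧ m (q + 1) < m q} then m j - 1 else m j

/-- The composition `φ_{i_1} ∘ ⋯ ∘ φ_{i_ℓ}` over a subset `I = {i_1 < ... < i_ℓ}`,
with the smallest index applied last. -/
noncomputable def phiComp (k : ℕ) (I : Finset ℕ) (m : ℕ → ℕ) : ℕ → ℕ :=
  (I.sort (· ≤ ·)).foldr (fun i f => phiOp k i f) m

lemma phi_main (k : ℕ) (m : ℕ → ℕ)
    (hpos : ∀ q, 1 ≤ q → q ≤ k → 0 < m q)
    (hzero : m (k + 1) = 0)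
    (hdec : ∀ q, m (q + 1) ≤ m q) :
    ∀ L : List ℕ, L.Pairwise (· < ·) → (∀ i ∈ L, i < k) →
      (∀ q, (L.foldr (fun i f => phiOp k i f) m) (q + 1) ≤ (L.foldr (fun i f => phiOp k i f) m) q) ∧
      (∀ j, (L.foldr (fun i f => phiOp k i f) m) j ≤ m j) ∧
      (∀ j, (∀ i ∈ L, j ≤ i) → (L.foldr (fun i f => phiOp k i f) m) j = m j) ∧
      (∀ j, k < j → (L.foldr (fun i f => phiOp k i f) m) j = m j) ∧
      (∑ j ∈ Finset.Icc 1 k, (L.foldr (fun i f => phiOp k i f) m) j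
        = (∑ j ∈ Finset.Icc 1 k, m j) - L.length) := by
  intro L
  induction L with
  | nil => intro _ _; exact ⟨hdec, fun j => le_refl _, fun j _ => rfl, fun j _ => rfl, by simp⟩
  | cons i T ih =>
    intro hsort hlt
    obtain ⟨hiT, hTsort⟩ := List.pairwise_cons.mp hsort
    have hik : i < k := hlt i (by simp)
    obtain ⟨ih1, ih2, ih3, ih4, ih5⟩ := ih hTsort (fun t ht => hlt t (by simp [ht]))
    set m' := T.foldr (fun i f => phiOp k i f) m with hm'
    have heq : m' (i + 1) = m (i + 1) :=
      ih3 _ (fun t ht => Nat.succ_le_of_lt (hiT t ht))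
    have hS : {q | i + 1 ≤ q ∧ q ≤ k ∧ m' (q + 1) < m' q}.Nonempty := by
      by_contra h
      rw [Set.not_nonempty_iff_eq_empty] at h
      have hflat : ∀ q, i + 1 ≤ q → q ≤ k → m' q = m' (q + 1) := by
        intro q h1 h2
        have hq : q ∉ ({q | i + 1 ≤ q ∧ q ≤ k ∧ m' (q + 1) < m' q} : Set ℕ) := by
          rw [h]; exact Set.notMem_empty q
        have h3 : ¬ (m' (q + 1) < m' q) := fun hc => hq ⟨h1, h2, hc⟩
        have h4 := ih1 q
        omega
      have hchain : ∀ d, i + 1 + d ≤ k + 1 → m' (i + 1 + d) = m' (i + 1) := by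
        intro d
        induction d with
        | zero => intro _; rfl
        | succ d ihd =>
          intro hd
          have h1 := hflat (i + 1 + d) (by omega) (by omega)
          have h2 := ihd (by omega)
          have he : i + 1 + (d + 1) = (i + 1 + d) + 1 := by ring
          rw [he]; omega
      have hc1 : m' (k + 1) = m' (i + 1) := by
        have := hchain (k - i) (by omega)
        have he : i + 1 + (k - i) = k + 1 := by omega
        rwa [he] at this
      have hk1 : m' (k + 1) = 0 := by rw [ih4 (k + 1) (by omega), hzero]
      have hp0 : 0 < m (i + 1) := hpos (i + 1) (by omega) (by omega)
      omega
    set p := sInf {q | i + 1 ≤ q ∧ q ≤ k ∧ m' (q + 1) < m' q} with hpdef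
    obtain ⟨hp1, hp2, hp3⟩ := Nat.sInf_mem hS
    rw [← hpdef] at hp1 hp2 hp3
    have hnew : ∀ j, (phiOp k i m') j = if j = p then m' j - 1 else m' j := fun j => rfl
    simp only [List.foldr_cons, ← hm']
    refine ⟨?_, ?_, ?_, ?_, ?_⟩
    · intro q
      by_cases hq : q = p
      · subst hq
        rw [hnew, hnew, if_pos rfl, if_neg (by omega)]
        omega
      · rw [hnew, hnew, if_neg hq]
        split_ifs with ha
        · have := ih1 q; omega
        · exact ih1 q
    · intro j
      rw [hnew]
      split_ifs with ha
      · have := ih2 j; omega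
      · exact ih2 j
    · intro j hj
      have hji : j ≤ i := hj i (by simp)
      rw [hnew, if_neg (by omega)]
      exact ih3 j (fun t ht => le_trans hji (le_of_lt (hiT t ht)))
    · intro j hj
      rw [hnew, if_neg (by omega)]
      exact ih4 j hj
    · have hpmem : p ∈ Finset.Icc 1 k := Finset.mem_Icc.mpr ⟨by omega, hp2⟩
      have hsum1 : ∑ j ∈ Finset.Icc 1 k, (phiOp k i m') j
          = (∑ j ∈ Finset.Icc 1 k, m' j) - 1 := by
        rw [← Finset.add_sum_erase _ _ hpmem, ← Finset.add_sum_erase _ m' hpmem]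
        have hrest : ∑ j ∈ (Finset.Icc 1 k).erase p, (phiOp k i m') j
            = ∑ j ∈ (Finset.Icc 1 k).erase p, m' j :=
          Finset.sum_congr rfl (fun x hx => by
            rw [hnew, if_neg (Finset.ne_of_mem_erase hx)])
        rw [hrest, hnew, if_pos rfl]
        omega
      rw [hsum1, ih5]
      simp only [List.length_cons]
      omega

/-- For a partition `m = (m_1 ≥ ... ≥ m_k > 0)` and any subset
`I ⊆ {0,...,k-1}` of cardinality `ℓ`, the tuple `φ_{i_1} ∘ ⋯ ∘ φ_{i_ℓ}(m)` has
entries `≥ 0` and entrywise `≤ m`, and its total sum equals `|m| - ℓ`. -/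
theorem phiComp_entries_and_sum
    (k : ℕ) (hk : 1 ≤ k) (m : ℕ → ℕ)
    (hdec : ∀ q, m (q + 1) ≤ m q)
    (hpos : ∀ q, 1 ≤ q → q ≤ k → 0 < m q)
    (hsupp : ∀ q, k < q → m q = 0)
    (I : Finset ℕ) (hI : I ⊆ Finset.range k) :
    (∀ j, 0 ≤ phiComp k I m j) ∧
    (∀ j, phiComp k I m j ≤ m j) ∧
    (∑ j ∈ Finset.Icc 1 k, phiComp k I m j = (∑ j ∈ Finset.Icc 1 k, m j) - I.card) := by
  have hzero : m (k + 1) = 0 := hsupp _ (by omega)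
  obtain ⟨h1, h2, h3, h4, h5⟩ := phi_main k m hpos hzero hdec (I.sort (· ≤ ·))
    (Finset.sortedLT_sort I).pairwise
    (fun i hi => Finset.mem_range.mp (hI ((Finset.mem_sort _).mp hi)))
  refine ⟨fun j => Nat.zero_le _, h2, ?_⟩
  have := h5
  rwa [Finset.length_sort] at this
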